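/- The derivative at s = 0 of the Riemann zeta function equals −(1/2)·log(2π), i.e. ζ′(0) = −log(2π)/2 (the Lerch formula, for which the paper gives a new proof via gluing of analytic torsions). -/

import Mathlib

open Complex Real Filter Topology

noncomputable abbrev lerchF (s : ℂ) : ℂ :=
  (s * completedRiemannZeta₀ s - 1 - s / (1 - s)) *
    (Complex.exp (s / 2 * (Real.log Real.pi : ℂ)) / (2 * Complex.Gamma (s / 2 + 1)))

lemma lerchF_hasDeriv :
    HasDerivAt lerchF
      ((completedRiemannZeta₀ 0 - 1) * (1 / 2) +
        (-1) * (((Real.log Real.pi : ℂ) / 2 * 2 + (Real.eulerMascheroniConstant : ℂ)) / 4)) 0 := by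
  have h1 : HasDerivAt (fun s : ℂ => s * completedRiemannZeta₀ s) (completedRiemannZeta₀ 0) 0 := by
    have := (hasDerivAt_id (0 : ℂ)).mul (differentiable_completedZeta₀ 0).hasDerivAt
    exact this.congr_deriv (by simp)
  have h2 : HasDerivAt (fun s : ℂ => s / (1 - s)) 1 0 := by
    have hd : HasDerivAt (fun s : ℂ => 1 - s) (-1) 0 := by
      simpa using (hasDerivAt_id (0 : ℂ)).const_sub 1
    have := (hasDerivAt_id (0 : ℂ)).div hd (by norm_num)
    exact this.congr_deriv (by simp)
  have hf : HasDerivAt (fun s : ℂ => s * completedRiemannZeta₀ s - 1 - s / (1 - s))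
      (completedRiemannZeta₀ 0 - 1) 0 := by
    exact ((h1.sub_const 1).sub h2).congr_deriv (by simp)
  have h3 : HasDerivAt (fun s : ℂ => Complex.exp (s / 2 * (Real.log Real.pi : ℂ)))
      ((Real.log Real.pi : ℂ) / 2) 0 := by
    have hin : HasDerivAt (fun s : ℂ => s / 2 * (Real.log Real.pi : ℂ))
        ((Real.log Real.pi : ℂ) / 2) 0 := by
      have := ((hasDerivAt_id (0 : ℂ)).div_const 2).mul_const (Real.log Real.pi : ℂ)
      exact this.congr_deriv (by simp; ring)
    simpa using hin.cexp
  have h4 : HasDerivAt (fun s : ℂ => 2 * Complex.Gamma (s / 2 + 1))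
      (-(Real.eulerMascheroniConstant : ℂ)) 0 := by
    have hin : HasDerivAt (fun s : ℂ => s / 2 + 1) (1 / 2 : ℂ) 0 := by
      simpa using ((hasDerivAt_id (0 : ℂ)).div_const 2).add_const 1
    have hG : HasDerivAt Complex.Gamma (-(Real.eulerMascheroniConstant : ℂ))
        ((fun s : ℂ => s / 2 + 1) 0) := by
      simpa using Complex.hasDerivAt_Gamma_one
    have := (hG.comp 0 hin).const_mul (2 : ℂ)
    exact this.congr_deriv (by simp; ring)
  have hg : HasDerivAt
      (fun s : ℂ => Complex.exp (s / 2 * (Real.log Real.pi : ℂ)) / (2 * Complex.Gamma (s / 2 + 1)))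
      (((Real.log Real.pi : ℂ) / 2 * 2 + (Real.eulerMascheroniConstant : ℂ)) / 4) 0 := by
    have := h3.div h4 (by simp [Complex.Gamma_one])
    exact this.congr_deriv (by simp [Complex.Gamma_one]; ring)
  have := hf.mul hg
  exact this.congr_deriv (by simp [Complex.Gamma_one])

lemma zeta_eventuallyEq_lerchF : riemannZeta =ᶠ[𝓝 (0 : ℂ)] lerchF := by
  filter_upwards [Metric.ball_mem_nhds (0 : ℂ) one_pos] with s hs
  rw [Metric.mem_ball, dist_zero_right] at hs
  rcases eq_or_ne s 0 with rfl | hs0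
  · rw [riemannZeta_zero]
    simp [lerchF, Complex.Gamma_one]
    norm_num
  · have hs2 : s / 2 ≠ 0 := div_ne_zero hs0 two_ne_zero
    have hs1 : (1 : ℂ) - s ≠ 0 := by
      intro h
      have : s = 1 := by linear_combination -h
      rw [this] at hs; simp at hs
    have hE : Complex.exp (s / 2 * (Real.log Real.pi : ℂ)) ≠ 0 := Complex.exp_ne_zero _
    have hΓ : Complex.Gamma (s / 2 + 1) ≠ 0 := by
      refine Complex.Gamma_ne_zero_of_re_pos ?_
      have : |s.re| < 1 := lt_of_le_of_lt (Complex.abs_re_le_norm s) hs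
      have := abs_lt.mp this
      simp only [Complex.add_re, Complex.div_re, Complex.one_re]
      have : -1 < s.re := this.1
      simp [Complex.div_ofNat_re]
      linarith
    have hGam : Complex.Gamma (s / 2) = Complex.Gamma (s / 2 + 1) / (s / 2) := by
      rw [Complex.Gamma_add_one _ hs2]
      field_simp
    have hGR : Gammaℝ s = (Complex.exp (s / 2 * (Real.log Real.pi : ℂ)))⁻¹ *
        (Complex.Gamma (s / 2 + 1) / (s / 2)) := by
      rw [Gammaℝ_def, ← hGam, Complex.cpow_def_of_ne_zero (by exact_mod_cast Real.pi_ne_zero),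
        ← Complex.ofReal_log Real.pi_pos.le,
        show (Real.log Real.pi : ℂ) * (-s / 2) = -(s / 2 * (Real.log Real.pi : ℂ)) by ring,
        Complex.exp_neg]
    have hGRne : Gammaℝ s ≠ 0 := by
      rw [hGR]
      exact mul_ne_zero (inv_ne_zero hE) (div_ne_zero hΓ hs2)
    have hmul : Complex.exp (s / 2 * (Real.log Real.pi : ℂ)) / (2 * Complex.Gamma (s / 2 + 1)) *
        ((Complex.exp (s / 2 * (Real.log Real.pi : ℂ)))⁻¹ *
          (Complex.Gamma (s / 2 + 1) / (s / 2))) = 1 / s := by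
      have hΓ' : Complex.Gamma (1 + s * (1 / 2)) ≠ 0 := by
        rwa [show (1 : ℂ) + s * (1 / 2) = s / 2 + 1 by ring]
      have hE' : Complex.exp (s * (Real.log Real.pi : ℂ) * (1 / 2)) ≠ 0 := Complex.exp_ne_zero _
      have haux : ∀ a b c : ℂ, a ≠ 0 → b ≠ 0 → c ≠ 0 →
          a * b * c * a⁻¹ * b⁻¹ * c⁻¹ = 1 := by
        intro a b c ha hb hc
        field_simp
      field_simp
      have hb : Complex.Gamma ((s + 2) / 2) ≠ 0 := by
        rwa [show (s + 2) / 2 = s / 2 + 1 by ring]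
      exact div_self hb
    rw [riemannZeta_def_of_ne_zero hs0, div_eq_iff hGRne, completedRiemannZeta_eq, hGR, lerchF,
      mul_assoc, hmul]
    field_simp

/-- Lerch's formula: the derivative of the Riemann zeta function at `s = 0`
equals `-(1/2) · log (2π)`. -/
theorem riemannZeta_deriv_zero :
    deriv riemannZeta 0 = -(Real.log (2 * Real.pi) : ℂ) / 2 := by
  rw [zeta_eventuallyEq_lerchF.deriv_eq, lerchF_hasDeriv.deriv]
  have h0 : completedRiemannZeta₀ 0 =
      ((Real.eulerMascheroniConstant : ℂ) - Complex.log (4 * (Real.pi : ℂ))) / 2 + 1 := by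
    rw [show (0 : ℂ) = 1 - 1 by ring, completedRiemannZeta₀_one_sub, completedRiemannZeta₀_one]
  have hlog : Complex.log (4 * (Real.pi : ℂ)) = (Real.log (4 * Real.pi) : ℂ) := by
    rw [Complex.ofReal_log (by positivity)]
    push_cast
    ring_nf
  have key : (Real.log (4 * Real.pi) : ℂ) + (Real.log Real.pi : ℂ) =
      2 * (Real.log (2 * Real.pi) : ℂ) := by
    have : Real.log (4 * Real.pi) + Real.log Real.pi = 2 * Real.log (2 * Real.pi) := by
      rw [← Real.log_mul (by positivity) Real.pi_ne_zero,
        show (4 : ℝ) * Real.pi * Real.pi = (2 * Real.pi) ^ 2 by ring, Real.log_pow]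
      push_cast; ring
    exact_mod_cast this
  rw [h0, hlog]
  linear_combination -key / 4
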